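/- Let λ > 0 and q : [0,∞) → [0,∞) continuous. If h : [0,∞) → [0,∞) is C¹ and satisfies h'(τ) ≤ −λ h(τ) + √(h(τ))·√(q(τ)) for all τ ≥ 0, then h(τ) ≤ 2 e^{−λτ} h(0) + e^{−λτ} ( ∫₀^τ e^{λs/2} √(q(s)) ds )² for all τ ≥ 0. -/

import Mathlib

open Real intervalIntegral

private lemma sqrt_add_le' (x y : ℝ) (hx : 0 ≤ x) (hy : 0 ≤ y) :
    Real.sqrt (x + y) ≤ Real.sqrt x + Real.sqrt y := by
  have h1 : x + y ≤ (Real.sqrt x + Real.sqrt y) ^ 2 := by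
    have := Real.sq_sqrt hx; have := Real.sq_sqrt hy
    nlinarith [Real.sqrt_nonneg x, Real.sqrt_nonneg y, mul_nonneg (Real.sqrt_nonneg x) (Real.sqrt_nonneg y)]
  calc Real.sqrt (x + y) ≤ Real.sqrt ((Real.sqrt x + Real.sqrt y) ^ 2) := Real.sqrt_le_sqrt h1
    _ = Real.sqrt x + Real.sqrt y := Real.sqrt_sq (by positivity)

/-- Grönwall-type lemma for `h' ≤ -λ h + √h √q`. -/
theorem stmt_10 (lam : ℝ) (hlam : 0 < lam) (q h : ℝ → ℝ)
    (hq_cont : Continuous q) (hq_nonneg : ∀ τ, 0 ≤ q τ)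
    (hh_nonneg : ∀ τ, 0 ≤ h τ) (hh_smooth : ContDiff ℝ 1 h)
    (hineq : ∀ τ : ℝ, 0 ≤ τ →
      deriv h τ ≤ -lam * h τ + Real.sqrt (h τ) * Real.sqrt (q τ)) :
    ∀ τ : ℝ, 0 ≤ τ →
      h τ ≤ 2 * Real.exp (-lam * τ) * h 0 +
        Real.exp (-lam * τ) *
          (∫ s in (0:ℝ)..τ, Real.exp (lam * s / 2) * Real.sqrt (q s)) ^ 2 := by
  intro τ hτ
  set p : ℝ → ℝ := fun s => Real.exp (lam * s / 2) * Real.sqrt (q s) with hp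
  have hp_cont : Continuous p := by
    exact (Real.continuous_exp.comp (by continuity)).mul (hq_cont.sqrt)
  have hp_nonneg : ∀ s, 0 ≤ p s := fun s =>
    mul_nonneg (Real.exp_pos _).le (Real.sqrt_nonneg _)
  set I := ∫ s in (0:ℝ)..τ, p s with hI
  have hI_nonneg : 0 ≤ I :=
    intervalIntegral.integral_nonneg hτ (fun s _ => hp_nonneg s)
  set g : ℝ → ℝ := fun x => Real.exp (lam * x) * h x with hg
  have hg_nonneg : ∀ x, 0 ≤ g x := fun x => mul_nonneg (Real.exp_pos _).le (hh_nonneg x)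
  have hh_diff : Differentiable ℝ h := hh_smooth.differentiable one_ne_zero
  have hh_deriv_cont : Continuous (deriv h) := hh_smooth.continuous_deriv le_rfl
  set G' : ℝ → ℝ := fun x => lam * Real.exp (lam * x) * h x + Real.exp (lam * x) * deriv h x
    with hG'
  have hGd : ∀ x, HasDerivAt g (G' x) x := by
    intro x
    have h1 : HasDerivAt (fun y => Real.exp (lam * y)) (lam * Real.exp (lam * x)) x := by
      have := (Real.hasDerivAt_exp (lam * x)).comp x ((hasDerivAt_id x).const_mul lam)
      simpa [mul_comm, Function.comp_def] using this
    exact h1.mul (hh_diff x).hasDerivAt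
  have hG'_cont : Continuous G' := by
    apply Continuous.add
    · exact (continuous_const.mul (Real.continuous_exp.comp (by continuity))).mul
        hh_smooth.continuous
    · exact (Real.continuous_exp.comp (by continuity)).mul hh_deriv_cont
  have hg_cont : Continuous g := (Real.continuous_exp.comp (by continuity)).mul hh_smooth.continuous
  -- key pointwise bound G' s ≤ √(g s) * p s for s ≥ 0
  have hkey : ∀ s : ℝ, 0 ≤ s → G' s ≤ Real.sqrt (g s) * p s := by
    intro s hs
    have hsq : Real.sqrt (g s) = Real.exp (lam * s / 2) * Real.sqrt (h s) := by
      have : Real.exp (lam * s) = Real.exp (lam * s / 2) ^ 2 := by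
        rw [sq, ← Real.exp_add]; ring_nf
      rw [hg]
      simp only []
      rw [this, Real.sqrt_mul (by positivity), Real.sqrt_sq (Real.exp_pos _).le]
    have h1 := hineq s hs
    have hexp := (Real.exp_pos (lam * s)).le
    calc G' s = Real.exp (lam * s) * (lam * h s + deriv h s) := by rw [hG']; ring
      _ ≤ Real.exp (lam * s) * (Real.sqrt (h s) * Real.sqrt (q s)) := by
          apply mul_le_mul_of_nonneg_left _ hexp
          linarith
      _ = Real.sqrt (g s) * p s := by
          rw [hsq, hp]
          have : Real.exp (lam * s) = Real.exp (lam * s / 2) * Real.exp (lam * s / 2) := by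
            rw [← Real.exp_add]; ring_nf
          rw [this]; ring
  -- main estimate with ε
  have hmain : ∀ ε : ℝ, 0 < ε →
      Real.sqrt (g τ + ε) ≤ Real.sqrt (g 0 + ε) + I / 2 := by
    intro ε hε
    set u : ℝ → ℝ := fun x => Real.sqrt (g x + ε) with hu
    set u' : ℝ → ℝ := fun x => G' x / (2 * Real.sqrt (g x + ε)) with hu'
    have hpos : ∀ x, 0 < g x + ε := fun x => by linarith [hg_nonneg x]
    have hud : ∀ x, HasDerivAt u (u' x) x := by
      intro x
      have := ((hGd x).add_const ε).sqrt (ne_of_gt (hpos x))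
      simpa [hu, hu'] using this
    have hu'_cont : Continuous u' :=
      hG'_cont.div (continuous_const.mul ((hg_cont.add continuous_const).sqrt))
        (fun x => by have := Real.sqrt_pos.2 (hpos x); positivity)
    have hftc : ∫ s in (0:ℝ)..τ, u' s = u τ - u 0 :=
      intervalIntegral.integral_eq_sub_of_hasDerivAt (fun x _ => hud x)
        (hu'_cont.intervalIntegrable 0 τ)
    have hbound : ∀ s ∈ Set.Icc (0:ℝ) τ, u' s ≤ p s / 2 := by
      intro s hs
      have hps : 0 < Real.sqrt (g s + ε) := Real.sqrt_pos.2 (hpos s)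
      rw [hu', div_le_iff₀ (by positivity)]
      have h1 : G' s ≤ Real.sqrt (g s) * p s := hkey s hs.1
      have h2 : Real.sqrt (g s) ≤ Real.sqrt (g s + ε) :=
        Real.sqrt_le_sqrt (by linarith)
      calc G' s ≤ Real.sqrt (g s) * p s := h1
        _ ≤ Real.sqrt (g s + ε) * p s :=
            mul_le_mul_of_nonneg_right h2 (hp_nonneg s)
        _ = p s / 2 * (2 * Real.sqrt (g s + ε)) := by ring
    have hmono : ∫ s in (0:ℝ)..τ, u' s ≤ ∫ s in (0:ℝ)..τ, p s / 2 := by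
      apply intervalIntegral.integral_mono_on hτ (hu'_cont.intervalIntegrable 0 τ)
        ((hp_cont.div_const 2).intervalIntegrable 0 τ) hbound
    have : ∫ s in (0:ℝ)..τ, p s / 2 = I / 2 := by
      rw [hI, intervalIntegral.integral_div]
    rw [hftc, this] at hmono
    simpa [hu] using by linarith
  -- remove ε
  have hsqrt : Real.sqrt (g τ) ≤ Real.sqrt (g 0) + I / 2 := by
    apply le_of_forall_pos_le_add
    intro ε hε
    have h1 := hmain (ε ^ 2) (by positivity)
    have h2 : Real.sqrt (g τ) ≤ Real.sqrt (g τ + ε ^ 2) :=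
      Real.sqrt_le_sqrt (by nlinarith)
    have h3 : Real.sqrt (g 0 + ε ^ 2) ≤ Real.sqrt (g 0) + ε := by
      have := sqrt_add_le' (g 0) (ε ^ 2) (hg_nonneg 0) (by positivity)
      rwa [Real.sqrt_sq hε.le] at this
    linarith
  have hgτ : g τ ≤ 2 * g 0 + I ^ 2 / 2 := by
    have h1 : g τ = Real.sqrt (g τ) ^ 2 := (Real.sq_sqrt (hg_nonneg τ)).symm
    have h2 : Real.sqrt (g 0) ^ 2 = g 0 := Real.sq_sqrt (hg_nonneg 0)
    nlinarith [Real.sqrt_nonneg (g τ), Real.sqrt_nonneg (g 0), hsqrt,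
      sq_nonneg (Real.sqrt (g 0) - I / 2)]
  -- conclude
  have hexp : Real.exp (-lam * τ) * Real.exp (lam * τ) = 1 := by
    rw [← Real.exp_add]; ring_nf; exact Real.exp_zero
  have hg0 : g 0 = h 0 := by simp [hg]
  have hhτ : h τ = Real.exp (-lam * τ) * g τ := by
    rw [hg]; simp only []
    rw [← mul_assoc, hexp, one_mul]
  rw [hhτ]
  have hen : 0 < Real.exp (-lam * τ) := Real.exp_pos _
  nlinarith [mul_le_mul_of_nonneg_left hgτ hen.le, sq_nonneg I]
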